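/- For every real t > 1, the cardinality of the set {⌊x/n^t⌋ : 1 ≤ n ≤ x} equals x^(1/(t+1)) · (t^(-t/(t+1)) + t^(1/(t+1))) + O(1) as x → ∞. -/

import Mathlib

open Real

/-- Bernoulli for nonpositive exponents: `1 - t*s ≤ (1+s)^(-t)` for `s > -1`, `t > 0`. -/
private lemma bern0 {s t : ℝ} (ht : 0 < t) (hs : -1 < s) :
    1 - t * s ≤ (1 + s) ^ (-t) := by
  have h1 : (0:ℝ) < 1 + s := by linarith
  rw [Real.rpow_def_of_pos h1]
  have hlog : Real.log (1 + s) ≤ s := by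
    have := Real.log_le_sub_one_of_pos h1
    linarith
  have h2 := Real.add_one_le_exp (-t * Real.log (1 + s))
  rw [mul_comm (Real.log (1 + s)) (-t)]
  nlinarith [mul_le_mul_of_nonneg_left hlog ht.le]

private lemma diff_le0 {t a : ℝ} (ht : 0 < t) (ha : 1 ≤ a) :
    1 / a ^ t - 1 / (a + 1) ^ t ≤ t / a ^ (t + 1) := by
  have ha0 : 0 < a := lt_of_lt_of_le one_pos ha
  have ha1 : 0 < a + 1 := by linarith
  have hat : (0:ℝ) < a ^ t := Real.rpow_pos_of_pos ha0 t
  have hat1 : (0:ℝ) < (a + 1) ^ t := Real.rpow_pos_of_pos ha1 t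
  have hb := bern0 ht (lt_trans neg_one_lt_zero (by positivity : (0:ℝ) < 1 / a))
  rw [show (1:ℝ) + 1 / a = (a + 1) / a by field_simp,
      Real.rpow_neg (by positivity), Real.div_rpow ha1.le ha0.le, inv_div,
      mul_one_div] at hb
  -- hb : 1 - t / a ≤ a ^ t / (a + 1) ^ t
  have h4 : (1 - t / a) * (a + 1) ^ t ≤ a ^ t := (le_div_iff₀ hat1).mp hb
  have h5 : (a - t) * (a + 1) ^ t ≤ a ^ t * a := by
    calc (a - t) * (a + 1) ^ t = (1 - t / a) * (a + 1) ^ t * a := by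
          field_simp
      _ ≤ a ^ t * a := mul_le_mul_of_nonneg_right h4 ha0.le
  rw [Real.rpow_add ha0, Real.rpow_one, div_sub_div _ _ hat.ne' hat1.ne',
      div_le_div_iff₀ (by positivity) (by positivity)]
  nlinarith [mul_le_mul_of_nonneg_left h5 hat.le]

private lemma diff_ge0 {t a : ℝ} (ht : 0 < t) (ha : 1 ≤ a) :
    t / (a + 1) ^ (t + 1) ≤ 1 / a ^ t - 1 / (a + 1) ^ t := by
  have ha0 : 0 < a := lt_of_lt_of_le one_pos ha
  have ha1 : 0 < a + 1 := by linarith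
  have hat : (0:ℝ) < a ^ t := Real.rpow_pos_of_pos ha0 t
  have hat1 : (0:ℝ) < (a + 1) ^ t := Real.rpow_pos_of_pos ha1 t
  have hb := bern0 ht (show (-1:ℝ) < -(1 / (a + 1)) by
    rw [neg_lt_neg_iff]; rw [div_lt_one ha1]; linarith)
  rw [show (1:ℝ) + -(1 / (a + 1)) = a / (a + 1) by field_simp; ring,
      Real.rpow_neg (by positivity), Real.div_rpow ha0.le ha1.le, inv_div] at hb
  have hb' : 1 + t / (a + 1) ≤ (a + 1) ^ t / a ^ t := by
    rw [mul_neg, sub_neg_eq_add, mul_one_div] at hb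
    exact hb
  have h4 : (1 + t / (a + 1)) * a ^ t ≤ (a + 1) ^ t := (le_div_iff₀ hat).mp hb'
  have h5 : (a + 1 + t) * a ^ t ≤ (a + 1) ^ t * (a + 1) := by
    calc (a + 1 + t) * a ^ t = (1 + t / (a + 1)) * a ^ t * (a + 1) := by
          field_simp
      _ ≤ (a + 1) ^ t * (a + 1) := mul_le_mul_of_nonneg_right h4 ha1.le
  rw [Real.rpow_add ha1, Real.rpow_one, div_sub_div _ _ hat.ne' hat1.ne',
      div_le_div_iff₀ (by positivity) (by positivity)]
  nlinarith [mul_le_mul_of_nonneg_left h5 hat1.le]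

/-- Discrete intermediate values: if jumps down are at most 1 on `[a, a+k]`,
every value between `f (a+k)` and `f a` is attained. -/
private lemma hits (f : ℕ → ℤ) :
    ∀ (k a : ℕ), (∀ n, a ≤ n → n < a + k → f n ≤ f (n + 1) + 1) →
      ∀ v : ℤ, f (a + k) ≤ v → v ≤ f a → ∃ n, a ≤ n ∧ n ≤ a + k ∧ f n = v := by
  intro k
  induction k with
  | zero =>
    intro a _ v h1 h2
    rw [Nat.add_zero] at h1
    exact ⟨a, le_refl a, by omega, by omega⟩
  | succ k ih =>
    intro a hjump v hv1 hv2
    by_cases hc : v ≤ f (a + 1)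
    · have hv1' : f (a + 1 + k) ≤ v := by
        rw [show a + 1 + k = a + (k + 1) by omega]; exact hv1
      obtain ⟨n, hn1, hn2, hn3⟩ :=
        ih (a + 1) (fun n h1 h2 => hjump n (by omega) (by omega)) v hv1' hc
      exact ⟨n, by omega, by omega, hn3⟩
    · push_neg at hc
      have := hjump a (le_refl a) (by omega)
      exact ⟨a, le_refl a, by omega, by omega⟩

/-- Strict antitonicity from per-step decrease. -/
private lemma sdec (f : ℕ → ℤ) (a b : ℕ) (h : ∀ n, a ≤ n → n + 1 ≤ b → f (n + 1) < f n) :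
    ∀ m n, a ≤ m → m < n → n ≤ b → f n < f m := by
  intro m n hm
  induction n with
  | zero => omega
  | succ k ih =>
    intro hmn hkb
    rcases Nat.lt_or_ge m k with h1 | h1
    · exact lt_trans (h k (by omega) hkb) (ih h1 (by omega))
    · have : m = k := by omega
      subst this
      exact h m hm hkb

theorem stmt_1 (t : ℝ) (ht : 1 < t) :
    ∃ C : ℝ, ∀ x : ℕ, 1 ≤ x →
      |(((Finset.Icc 1 x).image (fun n : ℕ => ⌊(x : ℝ) / (n : ℝ) ^ t⌋)).card : ℝ)
        - (x : ℝ) ^ (1 / (t + 1)) * (t ^ (-(t / (t + 1))) + t ^ (1 / (t + 1)))| ≤ C := by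
  have ht0 : 0 < t := by linarith
  have ht1 : (0:ℝ) < t + 1 := by linarith
  set x0 : ℕ := ⌈(2:ℝ) ^ (t + 1) * t⌉₊ + 2 with hx0def
  refine ⟨(x0 : ℝ) * (2 + t) + 5, ?_⟩
  intro x hx
  have hxpos : (0:ℝ) < x := by exact_mod_cast hx
  set g : ℕ → ℤ := fun n : ℕ => ⌊(x : ℝ) / (n : ℝ) ^ t⌋ with hgdef
  set T : ℝ := (x : ℝ) ^ (1 / (t + 1)) * (t ^ (-(t / (t + 1))) + t ^ (1 / (t + 1))) with hTdef
  set S := (Finset.Icc 1 x).image g with hSdef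
  have hT0 : 0 ≤ T := by positivity
  have hcard_le : S.card ≤ x := by
    refine le_trans Finset.card_image_le ?_
    simp [Nat.card_Icc]
  by_cases hbig : x0 ≤ x
  · -- main case
    have hx2 : 2 ≤ x := by omega
    have hx2R : (2:ℝ) ≤ x := by exact_mod_cast hx2
    have hxt : (2:ℝ) ^ (t + 1) * t ≤ (x : ℝ) := by
      have h1 := Nat.le_ceil ((2:ℝ) ^ (t + 1) * t)
      have h2 : (x0 : ℝ) ≤ (x : ℝ) := by exact_mod_cast hbig
      have h3 : ((⌈(2:ℝ) ^ (t + 1) * t⌉₊ : ℝ)) ≤ (x0 : ℝ) := by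
        rw [hx0def]; push_cast; linarith
      linarith
    set N0 : ℝ := ((x : ℝ) * t) ^ (1 / (t + 1)) with hN0def
    have hxt0 : (0:ℝ) < (x : ℝ) * t := by positivity
    have hN0pow : N0 ^ (t + 1) = (x : ℝ) * t := by
      rw [hN0def, ← Real.rpow_mul hxt0.le, one_div, inv_mul_cancel₀ ht1.ne', Real.rpow_one]
    have h2t1 : (0:ℝ) < (2:ℝ) ^ (t + 1) := by positivity
    have hN0_2 : 2 ≤ N0 := by
      have h2t : (2:ℝ) ^ (t + 1) ≤ (x : ℝ) * t := by nlinarith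
      calc (2:ℝ) = ((2:ℝ) ^ (t + 1)) ^ (1 / (t + 1)) := by
            rw [← Real.rpow_mul (by norm_num), mul_one_div, div_self ht1.ne', Real.rpow_one]
        _ ≤ N0 := by
            rw [hN0def]
            exact Real.rpow_le_rpow h2t1.le h2t (by positivity)
    have hN0pos : (0:ℝ) < N0 := by linarith
    have hN0x : N0 ≤ (x : ℝ) - 1 := by
      have hxx : (2:ℝ) ^ (t + 1) * t ≤ (x:ℝ) ^ t := by
        calc (2:ℝ) ^ (t + 1) * t ≤ (x : ℝ) := hxt
          _ = (x:ℝ) ^ (1:ℝ) := (Real.rpow_one _).symm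
          _ ≤ (x:ℝ) ^ t := Real.rpow_le_rpow_of_exponent_le (by linarith) ht.le
      have hdiv : ((x:ℝ) / 2) ^ (t + 1) = (x:ℝ) ^ (t + 1) / 2 ^ (t + 1) :=
        Real.div_rpow (by positivity) (by norm_num) _
      have hxsplit : (x:ℝ) ^ (t + 1) = (x:ℝ) ^ t * x := by
        rw [Real.rpow_add hxpos, Real.rpow_one]
      have h1 : (x : ℝ) * t ≤ ((x:ℝ) / 2) ^ (t + 1) := by
        rw [hdiv, hxsplit, le_div_iff₀ h2t1]
        nlinarith
      have h2 : N0 ≤ (x:ℝ) / 2 := by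
        calc N0 ≤ (((x:ℝ) / 2) ^ (t + 1)) ^ (1 / (t + 1)) :=
              Real.rpow_le_rpow hxt0.le h1 (by positivity)
          _ = (x:ℝ) / 2 := by
              rw [← Real.rpow_mul (by positivity), mul_one_div, div_self ht1.ne',
                Real.rpow_one]
      linarith
    set N : ℕ := ⌊N0⌋₊ with hNdef
    have hN2 : 2 ≤ N := Nat.le_floor (by exact_mod_cast hN0_2)
    have hNle : (N : ℝ) ≤ N0 := Nat.floor_le hN0pos.le
    have hN0lt : N0 < (N : ℝ) + 1 := by
      have := Nat.lt_floor_add_one N0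
      push_cast at this ⊢
      linarith
    have hNx : N + 1 ≤ x := by
      have : (N : ℝ) + 1 ≤ (x : ℝ) := by linarith
      exact_mod_cast this
    -- basic properties of g
    have hanti : ∀ m n : ℕ, 1 ≤ m → m ≤ n → g n ≤ g m := by
      intro m n hm hmn
      have hm0 : (0:ℝ) < (m : ℝ) := by exact_mod_cast hm
      apply Int.floor_le_floor
      apply div_le_div_of_nonneg_left (by positivity) (Real.rpow_pos_of_pos hm0 t)
      exact Real.rpow_le_rpow hm0.le (by exact_mod_cast hmn) ht0.le
    have hnn : ∀ n : ℕ, 1 ≤ n → 0 ≤ g n := by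
      intro n hn
      have hn0 : (0:ℝ) < (n : ℝ) := by exact_mod_cast hn
      exact Int.floor_nonneg.mpr (by positivity)
    -- strict decrease below N-1
    have hstrict : ∀ n : ℕ, 1 ≤ n → n + 1 ≤ N - 1 → g (n + 1) < g n := by
      intro n hn hn2
      have hnR : (1:ℝ) ≤ (n : ℝ) := by exact_mod_cast hn
      have hn0 : (0:ℝ) < (n : ℝ) := by linarith
      have hn1 : (0:ℝ) < (n : ℝ) + 1 := by linarith
      have hcast : ((n : ℝ) + 1) ≤ N0 := by
        have : ((n:ℕ) + 1 : ℝ) ≤ ((N - 1 : ℕ) : ℝ) := by exact_mod_cast hn2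
        have hcast2 : ((N - 1 : ℕ) : ℝ) = (N : ℝ) - 1 := by
          have : (1:ℕ) ≤ N := by omega
          push_cast [Nat.cast_sub this]
          ring
        push_cast at this
        rw [hcast2] at this
        linarith
      have h1 : ((n : ℝ) + 1) ^ (t + 1) ≤ (x : ℝ) * t := by
        calc ((n : ℝ) + 1) ^ (t + 1) ≤ N0 ^ (t + 1) :=
              Real.rpow_le_rpow (by positivity) hcast (by positivity)
          _ = (x : ℝ) * t := hN0pow
      have hd := diff_ge0 ht0 hnR
      have hd' := mul_le_mul_of_nonneg_left hd (le_of_lt hxpos)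
      rw [mul_sub, mul_one_div, mul_one_div, mul_div_assoc'] at hd'
      have hpow1 : (0:ℝ) < ((n:ℝ) + 1) ^ (t + 1) := Real.rpow_pos_of_pos hn1 _
      have hx1 : 1 ≤ (x : ℝ) * t / ((n : ℝ) + 1) ^ (t + 1) := by
        rw [le_div_iff₀ hpow1]; linarith
      have hkey : (x : ℝ) / ((n : ℝ) + 1) ^ t + 1 ≤ (x : ℝ) / (n : ℝ) ^ t := by
        linarith
      have hfl : g (n + 1) + 1 ≤ g n := by
        have h2 : ((g (n + 1) : ℝ) + 1) ≤ (x : ℝ) / (n : ℝ) ^ t := by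
          have h3 : (g (n + 1) : ℝ) ≤ (x : ℝ) / ((n : ℝ) + 1) ^ t := by
            rw [hgdef]
            push_cast
            exact Int.floor_le _
          linarith
        rw [hgdef]
        have := Int.le_floor.mpr (by push_cast; exact h2 : ((g (n + 1) + 1 : ℤ) : ℝ) ≤ (x : ℝ) / (n : ℝ) ^ t)
        exact this
      omega
    -- small gaps above N+1
    have hgap : ∀ n : ℕ, N + 1 ≤ n → g n ≤ g (n + 1) + 1 := by
      intro n hn
      have hnR : (1:ℝ) ≤ (n : ℝ) := by
        have : (1:ℕ) ≤ n := by omega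
        exact_mod_cast this
      have hn0 : (0:ℝ) < (n : ℝ) := by linarith
      have hcast : N0 ≤ (n : ℝ) := by
        have : ((N:ℕ) + 1 : ℝ) ≤ (n : ℝ) := by exact_mod_cast hn
        push_cast at this
        linarith
      have h1 : (x : ℝ) * t ≤ (n : ℝ) ^ (t + 1) := by
        calc (x : ℝ) * t = N0 ^ (t + 1) := hN0pow.symm
          _ ≤ (n : ℝ) ^ (t + 1) := Real.rpow_le_rpow hN0pos.le hcast (by positivity)
      have hd := diff_le0 ht0 hnR
      have hd' := mul_le_mul_of_nonneg_left hd (le_of_lt hxpos)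
      rw [mul_sub, mul_one_div, mul_one_div, mul_div_assoc'] at hd'
      have hpow1 : (0:ℝ) < ((n:ℝ)) ^ (t + 1) := Real.rpow_pos_of_pos hn0 _
      have hx1 : (x : ℝ) * t / (n : ℝ) ^ (t + 1) ≤ 1 := by
        rw [div_le_one hpow1]; linarith
      have hkey : (x : ℝ) / (n : ℝ) ^ t ≤ (x : ℝ) / ((n : ℝ) + 1) ^ t + 1 := by
        linarith
      have hfl : g n ≤ g (n + 1) + 1 := by
        rw [hgdef]
        have h2 : ⌊(x : ℝ) / (n : ℝ) ^ t⌋ ≤ ⌊(x : ℝ) / ((n : ℝ) + 1) ^ t + 1⌋ :=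
          Int.floor_le_floor hkey
        rw [Int.floor_add_one] at h2
        simpa using h2
      exact hfl
    have hgx0 : g x = 0 := by
      have hx1R : (1:ℝ) < x := by linarith
      have hlt : (x : ℝ) / (x : ℝ) ^ t < 1 := by
        rw [div_lt_one (by positivity)]
        calc (x : ℝ) = (x : ℝ) ^ (1:ℝ) := (Real.rpow_one _).symm
          _ < (x : ℝ) ^ t := Real.rpow_lt_rpow_of_exponent_lt hx1R ht
      rw [hgdef]
      exact Int.floor_eq_zero_iff.mpr ⟨by positivity, hlt⟩
    -- the three pieces
    set A := (Finset.Icc 1 (N - 1)).image g with hAdef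
    have hA_card : A.card = N - 1 := by
      rw [hAdef, Finset.card_image_of_injOn, Nat.card_Icc]
      · omega
      · intro a ha b hb hab
        simp only [Finset.coe_Icc, Set.mem_Icc] at ha hb
        by_contra hne
        rcases Nat.lt_or_ge a b with h1 | h1
        · have := sdec g 1 (N - 1) (fun n h1 h2 => hstrict n h1 h2) a b ha.1 h1 hb.2
          omega
        · have h2 : b < a := by omega
          have := sdec g 1 (N - 1) (fun n h1 h2 => hstrict n h1 h2) b a hb.1 h2 ha.2
          omega
    set V : ℤ := g (N + 1) with hVdef
    have hV0 : 0 ≤ V := hnn _ (by omega)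
    set B := Finset.Icc (0:ℤ) V with hBdef
    have hB_card : B.card = V.toNat + 1 := by
      rw [hBdef, Int.card_Icc]
      omega
    have hB_sub : B ⊆ S := by
      intro v hv
      rw [hBdef, Finset.mem_Icc] at hv
      have hjump : ∀ n, N + 1 ≤ n → n < N + 1 + (x - (N + 1)) → g n ≤ g (n + 1) + 1 := by
        intro n h1 _
        exact hgap n h1
      obtain ⟨n, hn1, hn2, hn3⟩ := hits g (x - (N + 1)) (N + 1) hjump v
        (by rw [show N + 1 + (x - (N + 1)) = x by omega, hgx0]; exact hv.1) hv.2
      rw [hSdef]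
      apply Finset.mem_image.mpr
      exact ⟨n, Finset.mem_Icc.mpr ⟨by omega, by omega⟩, hn3⟩
    have hA_sub : A ⊆ S := by
      rw [hAdef, hSdef]
      exact Finset.image_subset_image (Finset.Icc_subset_Icc_right (by omega))
    -- lower bound
    have hlow : N - 1 + V.toNat ≤ S.card := by
      have hAB : (A ∩ B).card ≤ 1 := by
        apply Finset.card_le_one.mpr
        have hkey : ∀ c ∈ A ∩ B, c = V := by
          intro c hc
          rw [Finset.mem_inter] at hc
          obtain ⟨n, hn, rfl⟩ := Finset.mem_image.mp hc.1
          rw [Finset.mem_Icc] at hn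
          have h1 : V ≤ g n := hanti n (N + 1) hn.1 (by omega)
          have h2 : g n ≤ V := (Finset.mem_Icc.mp hc.2).2
          omega
        intro a ha b hb
        rw [hkey a ha, hkey b hb]
      have h1 := Finset.card_union_add_card_inter A B
      have h2 : (A ∪ B).card ≤ S.card := Finset.card_le_card (Finset.union_subset hA_sub hB_sub)
      omega
    -- upper bound
    have hupp : S.card ≤ N - 1 + 3 + (V.toNat + 1) := by
      have hsub : S ⊆ A ∪ (Finset.Icc (N - 1) (N + 1)).image g ∪ B := by
        intro v hv
        rw [hSdef] at hv
        obtain ⟨n, hn, rfl⟩ := Finset.mem_image.mp hv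
        rw [Finset.mem_Icc] at hn
        simp only [Finset.mem_union]
        by_cases h1 : n ≤ N - 1
        · exact Or.inl (Or.inl (Finset.mem_image.mpr ⟨n, Finset.mem_Icc.mpr ⟨hn.1, h1⟩, rfl⟩))
        · by_cases h2 : n ≤ N + 1
          · exact Or.inl (Or.inr (Finset.mem_image.mpr ⟨n, Finset.mem_Icc.mpr ⟨by omega, h2⟩, rfl⟩))
          · refine Or.inr (Finset.mem_Icc.mpr ⟨hnn n hn.1, ?_⟩)
            exact hanti (N + 1) n (by omega) (by omega)
      have hmid : ((Finset.Icc (N - 1) (N + 1)).image g).card ≤ 3 := by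
        refine le_trans Finset.card_image_le ?_
        rw [Nat.card_Icc]
        omega
      calc S.card ≤ (A ∪ (Finset.Icc (N - 1) (N + 1)).image g ∪ B).card :=
            Finset.card_le_card hsub
        _ ≤ (A ∪ (Finset.Icc (N - 1) (N + 1)).image g).card + B.card :=
            Finset.card_union_le _ _
        _ ≤ A.card + ((Finset.Icc (N - 1) (N + 1)).image g).card + B.card := by
            have := Finset.card_union_le A ((Finset.Icc (N - 1) (N + 1)).image g)
            omega
        _ ≤ N - 1 + 3 + (V.toNat + 1) := by
            rw [hA_card, hB_card]
            omega
    -- real estimates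
    have hN0t : (0:ℝ) < N0 ^ t := Real.rpow_pos_of_pos hN0pos t
    have hN1t : (0:ℝ) < ((N:ℝ) + 1) ^ t := Real.rpow_pos_of_pos (by positivity) t
    have hVle : (V : ℝ) ≤ (x : ℝ) / N0 ^ t := by
      have h1 : (V : ℝ) ≤ (x : ℝ) / ((N : ℝ) + 1) ^ t := by
        rw [hVdef, hgdef]
        push_cast
        exact Int.floor_le _
      have h2 : (x : ℝ) / ((N : ℝ) + 1) ^ t ≤ (x : ℝ) / N0 ^ t :=
        div_le_div_of_nonneg_left (by positivity) hN0t
          (Real.rpow_le_rpow hN0pos.le (by linarith) ht0.le)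
      linarith
    have hVge : (x : ℝ) / N0 ^ t - 2 ≤ (V : ℝ) := by
      have h1 : (x : ℝ) / ((N : ℝ) + 1) ^ t - 1 < (V : ℝ) := by
        rw [hVdef, hgdef]
        push_cast
        exact Int.sub_one_lt_floor _
      have h2 : (x : ℝ) / (N0 + 1) ^ t ≤ (x : ℝ) / ((N : ℝ) + 1) ^ t :=
        div_le_div_of_nonneg_left (by positivity) hN1t
          (Real.rpow_le_rpow (by positivity) (by linarith) ht0.le)
      have hd := diff_le0 ht0 (show (1:ℝ) ≤ N0 by linarith)
      have hd' := mul_le_mul_of_nonneg_left hd (le_of_lt hxpos)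
      rw [mul_sub, mul_one_div, mul_one_div, mul_div_assoc'] at hd'
      have h3 : (x : ℝ) * t / N0 ^ (t + 1) = 1 := by
        rw [hN0pow, div_self hxt0.ne']
      linarith
    -- T = N0 + x / N0^t
    have hTsplit : T = N0 + (x : ℝ) / N0 ^ t := by
      have e1 : N0 = (x : ℝ) ^ (1 / (t + 1)) * t ^ (1 / (t + 1)) := by
        rw [hN0def, Real.mul_rpow hxpos.le ht0.le]
      have e2 : N0 ^ t = (x : ℝ) ^ (t / (t + 1)) * t ^ (t / (t + 1)) := by
        rw [hN0def, ← Real.rpow_mul hxt0.le, one_div, inv_mul_eq_div,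
          Real.mul_rpow hxpos.le ht0.le]
      have e3 : (x : ℝ) / N0 ^ t = (x : ℝ) ^ (1 / (t + 1)) * t ^ (-(t / (t + 1))) := by
        rw [e2, Real.rpow_neg ht0.le, div_mul_eq_div_div]
        have e4 : (x : ℝ) / (x : ℝ) ^ (t / (t + 1)) = (x : ℝ) ^ (1 / (t + 1)) := by
          rw [show (1 : ℝ) / (t + 1) = 1 - t / (t + 1) by field_simp; ring,
            Real.rpow_sub hxpos, Real.rpow_one]
        rw [e4, div_eq_mul_inv]
      rw [hTdef, e3, e1]
      ring
    -- conclude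
    have hcast1 : ((N - 1 : ℕ) : ℝ) = (N : ℝ) - 1 := by
      have : (1:ℕ) ≤ N := by omega
      push_cast [Nat.cast_sub this]
      ring
    have hcast2 : ((V.toNat : ℕ) : ℝ) = (V : ℝ) := by
      rw [← Int.toNat_of_nonneg hV0]
      push_cast
      rw [Int.toNat_of_nonneg hV0]
    have hlowR : (N : ℝ) - 1 + (V : ℝ) ≤ (S.card : ℝ) := by
      have := hlow
      have hc : ((N - 1 + V.toNat : ℕ) : ℝ) ≤ (S.card : ℝ) := by exact_mod_cast this
      push_cast [Int.toNat_of_nonneg hV0] at hc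
      linarith
    have huppR : (S.card : ℝ) ≤ (N : ℝ) - 1 + 3 + ((V : ℝ) + 1) := by
      have hc : ((S.card : ℕ) : ℝ) ≤ ((N - 1 + 3 + (V.toNat + 1) : ℕ) : ℝ) := by exact_mod_cast hupp
      push_cast [Int.toNat_of_nonneg hV0] at hc
      linarith
    have habs : |(S.card : ℝ) - T| ≤ 4 := by
      rw [abs_le, hTsplit]
      constructor <;> linarith [hN0lt, hNle, hVle, hVge, hlowR, huppR]
    have hC : (4:ℝ) ≤ (x0 : ℝ) * (2 + t) + 5 := by
      have : (0:ℝ) ≤ (x0 : ℝ) * (2 + t) := by positivity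
      linarith
    calc |(S.card : ℝ) - T| ≤ 4 := habs
      _ ≤ (x0 : ℝ) * (2 + t) + 5 := hC
  · -- small case
    push_neg at hbig
    have h1 : (S.card : ℝ) ≤ (x : ℝ) := by exact_mod_cast hcard_le
    have hx1R : (1:ℝ) ≤ (x : ℝ) := by exact_mod_cast hx
    have h2 : T ≤ (x : ℝ) * (1 + t) := by
      have e1 : (x : ℝ) ^ (1 / (t + 1)) ≤ (x : ℝ) := by
        calc (x : ℝ) ^ (1 / (t + 1)) ≤ (x : ℝ) ^ (1:ℝ) :=
              Real.rpow_le_rpow_of_exponent_le hx1R (by rw [div_le_one ht1]; linarith)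
          _ = (x : ℝ) := Real.rpow_one _
      have e2 : t ^ (-(t / (t + 1))) ≤ 1 := by
        apply Real.rpow_le_one_of_one_le_of_nonpos ht.le
        have : 0 < t / (t + 1) := by positivity
        linarith
      have e3 : t ^ (1 / (t + 1)) ≤ t := by
        calc t ^ (1 / (t + 1)) ≤ t ^ (1:ℝ) :=
              Real.rpow_le_rpow_of_exponent_le ht.le (by rw [div_le_one ht1]; linarith)
          _ = t := Real.rpow_one _
      have e4 : (0:ℝ) ≤ (x : ℝ) ^ (1 / (t + 1)) := by positivity
      calc T = (x : ℝ) ^ (1 / (t + 1)) * (t ^ (-(t / (t + 1))) + t ^ (1 / (t + 1))) := hTdef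
        _ ≤ (x : ℝ) * (1 + t) :=
              mul_le_mul e1 (add_le_add e2 e3) (by positivity) (by positivity)
    have h3 : (x : ℝ) ≤ (x0 : ℝ) := by exact_mod_cast hbig.le
    have h4 : (0:ℝ) ≤ (x0 : ℝ) := by positivity
    have h5 : (x : ℝ) * (1 + t) ≤ (x0 : ℝ) * (1 + t) :=
      mul_le_mul_of_nonneg_right h3 (by linarith)
    have h6 : (x0 : ℝ) * (1 + t) ≤ (x0 : ℝ) * (2 + t) :=
      mul_le_mul_of_nonneg_left (by linarith) h4
    have hc0 : (0:ℝ) ≤ (S.card : ℝ) := Nat.cast_nonneg _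
    rw [abs_le]
    constructor
    · linarith
    · linarith
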